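/- Fix 2 ≤ m ≤ n−1 and let H(ψ), H(χ) ∈ Z_{n,m}. Then H(ψ) and H(χ) are isomorphic if and only if there exist a permutation σ of {m+1,…,n} and a permutation τ of {1,…,m} fixing 1 such that χ(x^σ, y^σ)^τ = ψ(x,y) for all x, y ∈ {m+1,…,n}. -/

import Mathlib

set_option maxHeartbeats 1600000 in
/-- For H(ψ), H(χ) ∈ Z_{n,m}: the semigroups are isomorphic iff there are a permutation σ
of A = {m+1,…,n} and a permutation τ of [m] fixing the zero such that
χ(σx, σy)^τ = ψ(x,y) for all x, y ∈ A.  Here {1,…,n} is Fin n, the zero is 0, [m] is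
Fin m (cast into Fin n), and A = {x : Fin n | m ≤ x.val}. -/
theorem stmt15 (n m : ℕ) (hm2 : 2 ≤ m) (hmn : m ≤ n - 1)
    (ψ χ : {x : Fin n // m ≤ x.val} → {x : Fin n // m ≤ x.val} → Fin m)
    (hψ : ∀ b : Fin m, b.val ≠ 0 → ∃ x y, ψ x y = b)
    (hχ : ∀ b : Fin m, b.val ≠ 0 → ∃ x y, χ x y = b)
    (mulψ mulχ : Fin n → Fin n → Fin n)
    (hmulψ : ∀ x y, mulψ x y =
      if h : m ≤ x.val ∧ m ≤ y.val then
        Fin.castLE (by omega) (ψ ⟨x, h.1⟩ ⟨y, h.2⟩) else ⟨0, by omega⟩)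
    (hmulχ : ∀ x y, mulχ x y =
      if h : m ≤ x.val ∧ m ≤ y.val then
        Fin.castLE (by omega) (χ ⟨x, h.1⟩ ⟨y, h.2⟩) else ⟨0, by omega⟩) :
    (∃ π : Equiv.Perm (Fin n), ∀ x y, π (mulψ x y) = mulχ (π x) (π y)) ↔
    (∃ (σ : Equiv.Perm {x : Fin n // m ≤ x.val}) (τ : Equiv.Perm (Fin m)),
      (τ ⟨0, by omega⟩).val = 0 ∧ ∀ x y, τ (χ (σ x) (σ y)) = ψ x y) := by
  have hmn' : m + 1 ≤ n := by omega
  have hχlt : ∀ x y, (mulχ x y).val < m := by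
    intro x y
    rw [hmulχ]
    split
    · exact (χ _ _).isLt
    · simpa using by omega
  have hψlt : ∀ x y, (mulψ x y).val < m := by
    intro x y
    rw [hmulψ]
    split
    · exact (ψ _ _).isLt
    · simpa using by omega
  -- every element of [m] is a product under mulψ
  have hsurjψ : ∀ x : Fin n, x.val < m → ∃ a b, mulψ a b = x := by
    intro x hx
    by_cases hx0 : x.val = 0
    · refine ⟨x, x, ?_⟩
      rw [hmulψ]
      rw [dif_neg (by omega)]
      exact Fin.ext hx0.symm
    · obtain ⟨a, c, hac⟩ := hψ ⟨x.val, hx⟩ hx0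
      refine ⟨a, c, ?_⟩
      rw [hmulψ, dif_pos ⟨a.2, c.2⟩]
      have : (⟨(a : Fin n), a.2⟩ : {x : Fin n // m ≤ x.val}) = a := rfl
      rw [this]
      have : (⟨(c : Fin n), c.2⟩ : {x : Fin n // m ≤ x.val}) = c := rfl
      rw [this, hac]
      exact Fin.ext rfl
  have hsurjχ : ∀ x : Fin n, x.val < m → ∃ a b, mulχ a b = x := by
    intro x hx
    by_cases hx0 : x.val = 0
    · refine ⟨x, x, ?_⟩
      rw [hmulχ]
      rw [dif_neg (by omega)]
      exact Fin.ext hx0.symm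
    · obtain ⟨a, c, hac⟩ := hχ ⟨x.val, hx⟩ hx0
      refine ⟨a, c, ?_⟩
      rw [hmulχ, dif_pos ⟨a.2, c.2⟩]
      have : (⟨(a : Fin n), a.2⟩ : {x : Fin n // m ≤ x.val}) = a := rfl
      rw [this]
      have : (⟨(c : Fin n), c.2⟩ : {x : Fin n // m ≤ x.val}) = c := rfl
      rw [this, hac]
      exact Fin.ext rfl
  constructor
  · rintro ⟨π, hπ⟩
    -- π preserves [m]
    have hπ' : ∀ x y, π⁻¹ (mulχ x y) = mulψ (π⁻¹ x) (π⁻¹ y) := by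
      intro x y
      have := hπ (π⁻¹ x) (π⁻¹ y)
      simp only [Equiv.Perm.inv_def, Equiv.apply_symm_apply] at this
      rw [← this]
      simp
    have hfwd : ∀ x : Fin n, x.val < m → (π x).val < m := by
      intro x hx
      obtain ⟨a, b, hab⟩ := hsurjψ x hx
      rw [← hab, hπ]
      exact hχlt _ _
    have hbwd : ∀ x : Fin n, x.val < m → (π⁻¹ x).val < m := by
      intro x hx
      obtain ⟨a, b, hab⟩ := hsurjχ x hx
      rw [← hab, hπ']
      exact hψlt _ _
    have hiff : ∀ x : Fin n, m ≤ x.val ↔ m ≤ (π x).val := by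
      intro x
      constructor
      · intro hx
        by_contra h
        have := hbwd (π x) (by omega)
        simp at this
        omega
      · intro hx
        by_contra h
        have := hfwd x (by omega)
        omega
    refine ⟨π.subtypePerm (fun x => (hiff x).symm), ?_⟩
    -- τ₀ : restriction of π to [m]
    set τ₀ : Equiv.Perm (Fin m) :=
      { toFun := fun b => ⟨(π (Fin.castLE (by omega) b)).val,
          hfwd _ (by simp [Fin.castLE])⟩
        invFun := fun b => ⟨(π⁻¹ (Fin.castLE (by omega) b)).val,
          hbwd _ (by simp [Fin.castLE])⟩
        left_inv := by
          intro b
          apply Fin.ext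
          simp only
          have : (Fin.castLE (by omega : m ≤ n)
              ⟨(π (Fin.castLE (by omega) b)).val, hfwd _ (by simp [Fin.castLE])⟩)
              = π (Fin.castLE (by omega) b) := Fin.ext rfl
          rw [this]
          simp [Fin.castLE]
        right_inv := by
          intro b
          apply Fin.ext
          simp only
          have : (Fin.castLE (by omega : m ≤ n)
              ⟨(π⁻¹ (Fin.castLE (by omega) b)).val, hbwd _ (by simp [Fin.castLE])⟩)
              = π⁻¹ (Fin.castLE (by omega) b) := Fin.ext rfl
          rw [this]
          simp [Fin.castLE] } with hτ₀
    have hcast : ∀ b : Fin m, Fin.castLE (by omega : m ≤ n) (τ₀ b)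
        = π (Fin.castLE (by omega) b) := by
      intro b; exact Fin.ext rfl
    have hπ0 : ∀ z : Fin n, z.val = 0 → (π z).val = 0 := by
      intro z hz0
      have hzz : mulψ z z = z := by
        rw [hmulψ, dif_neg (by omega)]
        exact Fin.ext hz0.symm
      have h1 := hπ z z
      rw [hzz] at h1
      have h3 := congrArg Fin.val h1
      have h4 : (mulχ (π z) (π z)).val = 0 := by
        rw [hmulχ, dif_neg]
        have := hfwd z (by omega)
        simp only [not_and]
        intro hc; omega
      exact h3.trans h4
    have hτ₀zero : τ₀ ⟨0, by omega⟩ = ⟨0, by omega⟩ := by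
      apply Fin.ext
      exact hπ0 _ rfl
    refine ⟨τ₀⁻¹, ?_, ?_⟩
    · have := hτ₀zero
      rw [← this]
      simp
    · intro x y
      -- from hπ at ↑x ↑y
      have hx := x.2
      have hy := y.2
      have h1 := hπ (x : Fin n) (y : Fin n)
      rw [hmulψ, dif_pos ⟨hx, hy⟩] at h1
      rw [hmulχ, dif_pos ⟨(hiff _).mp hx, (hiff _).mp hy⟩] at h1
      have hx' : (⟨(x : Fin n), x.2⟩ : {x : Fin n // m ≤ x.val}) = x := rfl
      have hy' : (⟨(y : Fin n), y.2⟩ : {x : Fin n // m ≤ x.val}) = y := rfl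
      rw [hx', hy'] at h1
      rw [← hcast (ψ x y)] at h1
      have h2 : τ₀ (ψ x y) = χ (π.subtypePerm (fun x => (hiff x).symm) x) (π.subtypePerm (fun x => (hiff x).symm) y) :=
        Fin.castLE_injective (by omega) h1
      rw [← h2]
      simp
  · rintro ⟨σ, τ, hτ0, hrel⟩
    have hτ0' : τ ⟨0, by omega⟩ = ⟨0, by omega⟩ := Fin.ext hτ0
    have hτinv0 : τ⁻¹ ⟨0, by omega⟩ = ⟨0, by omega⟩ := by
      rw [Equiv.Perm.inv_def, Equiv.symm_apply_eq, hτ0']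
    -- equiv between complement and Fin m
    let e : {x : Fin n // ¬ m ≤ x.val} ≃ Fin m :=
      { toFun := fun x => ⟨x.val.val, Nat.lt_of_not_le x.2⟩
        invFun := fun b => ⟨Fin.castLE (by omega) b, Nat.not_le.mpr b.isLt⟩
        left_inv := fun x => Subtype.ext (Fin.ext rfl)
        right_inv := fun b => Fin.ext rfl }
    let en : Equiv.Perm {x : Fin n // ¬ m ≤ x.val} := (e.permCongr.symm) τ⁻¹
    refine ⟨Equiv.Perm.subtypeCongr σ en, ?_⟩
    have hπA : ∀ (x : Fin n) (h : m ≤ x.val),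
        Equiv.Perm.subtypeCongr σ en x = σ ⟨x, h⟩ :=
      fun x h => Equiv.Perm.subtypeCongr.left_apply σ en h
    have hπB : ∀ (x : Fin n) (h : ¬ m ≤ x.val),
        (Equiv.Perm.subtypeCongr σ en x).val = (τ⁻¹ ⟨x.val, by omega⟩).val := by
      intro x h
      rw [Equiv.Perm.subtypeCongr.right_apply σ en h]
      rfl
    intro x y
    by_cases h : m ≤ x.val ∧ m ≤ y.val
    · rw [hmulψ, dif_pos h]
      have hA : m ≤ (Equiv.Perm.subtypeCongr σ en x).val := by
        rw [hπA x h.1]; exact (σ ⟨x, h.1⟩).2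
      have hB : m ≤ (Equiv.Perm.subtypeCongr σ en y).val := by
        rw [hπA y h.2]; exact (σ ⟨y, h.2⟩).2
      rw [hmulχ, dif_pos ⟨hA, hB⟩]
      -- LHS: π applied to castLE (ψ x' y'), which lands in complement branch
      have hlt : ¬ m ≤ (Fin.castLE (by omega : m ≤ n) (ψ ⟨x, h.1⟩ ⟨y, h.2⟩)).val := by
        simp [Fin.castLE]
      rw [Equiv.Perm.subtypeCongr.right_apply σ en hlt]
      apply Fin.ext
      show ((e.permCongr.symm τ⁻¹) _ : {x : Fin n // ¬ m ≤ x.val}).val.val = _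
      rw [Equiv.permCongr_symm, Equiv.permCongr_apply]
      have he : e ⟨Fin.castLE (by omega) (ψ ⟨x, h.1⟩ ⟨y, h.2⟩), hlt⟩ = ψ ⟨x, h.1⟩ ⟨y, h.2⟩ :=
        Fin.ext rfl
      simp only [Equiv.symm_symm]
      rw [he]
      have hsx : (⟨(Equiv.Perm.subtypeCongr σ en x : Fin n), hA⟩ : {x : Fin n // m ≤ x.val})
          = σ ⟨x, h.1⟩ := Subtype.ext (hπA x h.1)
      have hsy : (⟨(Equiv.Perm.subtypeCongr σ en y : Fin n), hB⟩ : {x : Fin n // m ≤ x.val})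
          = σ ⟨y, h.2⟩ := Subtype.ext (hπA y h.2)
      rw [hsx, hsy]
      have : ψ ⟨x, h.1⟩ ⟨y, h.2⟩ = τ (χ (σ ⟨x, h.1⟩) (σ ⟨y, h.2⟩)) := (hrel _ _).symm
      rw [this]
      simp [e]
    · rw [hmulψ, dif_neg h]
      have hne : ¬ (m ≤ (Equiv.Perm.subtypeCongr σ en x).val
          ∧ m ≤ (Equiv.Perm.subtypeCongr σ en y).val) := by
        intro hc
        apply h
        constructor
        · by_contra hx
          have := hπB x hx
          have := (τ⁻¹ ⟨x.val, by omega⟩).isLt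
          omega
        · by_contra hy
          have := hπB y hy
          have := (τ⁻¹ ⟨y.val, by omega⟩).isLt
          omega
      rw [hmulχ, dif_neg hne]
      have h0 : ¬ m ≤ (⟨0, by omega⟩ : Fin n).val := by simp; omega
      apply Fin.ext
      rw [hπB _ h0]
      show (τ⁻¹ ⟨0, by omega⟩).val = 0
      rw [hτinv0]
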